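/- Fix an injective enumeration ⟨qₙ : n < ω⟩ of ℚ and functions cd : ω^ω → 𝔓(ℚ) and dcd : 𝔓(ℚ) → ω^ω with cd ∘ dcd = id. Define the operations on ω^ω: F_c(h) = dcd(ℚ ∖ cd(h)); F_m(h) = dcd(M(cd(h))), where M(X) is the maximal crowded subset of X; F_f(h) = f_{cd(h)}, where f_X is constantly zero unless X is crowded and unbounded above, in which case it is the fast-enough-growing function of X; F_s(g,h) = dcd(shr(cd(g), h)); and F_i(g,h) = dcd(cd(g) ∩ cd(h)). Let ℱ_{gruff} = {F_c, F_m, F_f, F_s, F_i}. If κ is a regular cardinal and there exists a ⟨𝔡, ℱ_{gruff}, κ⟩-pathway, then there exists a gruff ultrafilter. -/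

import Mathlib

open Cardinal Set

/-- A subset `S` is closed under a finitary operation `F` (presented as a pair of an
arity `n` and a function `(Fin n → B) → B`). -/
def ClosedUnderOp {B : Type*} (S : Set B) (F : Σ n : ℕ, (Fin n → B) → B) : Prop :=
  ∀ v : Fin F.1 → B, (∀ i, v i ∈ S) → F.2 v ∈ S

/-- `IsPathway E 𝓕 δ seq` says that `⟨seq α : α < δ⟩` is a
`⟨⟨A,B,E⟩, 𝓕, δ⟩`-pathway: an increasing continuous sequence of subsets of `B`
whose union is all of `B`, such that no `seq α` is `E`-dominating, and with each
`seq α` closed under every operation in `𝓕`. -/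
structure IsPathway {A B : Type*} (E : A → B → Prop)
    (𝓕 : Set (Σ n : ℕ, (Fin n → B) → B)) (δ : Ordinal)
    (seq : Ordinal → Set B) : Prop where
  mono : ∀ α β : Ordinal, α ≤ β → β < δ → seq α ⊆ seq β
  cont : ∀ γ : Ordinal, γ < δ → Order.IsSuccLimit γ → seq γ = ⋃ α : Ordinal, ⋃ _ : α < γ, seq α
  total : (⋃ α : Ordinal, ⋃ _ : α < δ, seq α) = Set.univ
  avoid : ∀ α : Ordinal, α < δ → ∃ x : A, ∀ y ∈ seq α, ¬ E x y
  closedF : ∀ α : Ordinal, α < δ → ∀ F ∈ 𝓕, ClosedUnderOp (seq α) F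

/-- The evaluation of the triple `⟨A, B, E⟩`: the least cardinality of an `E`-dominating
family `X ⊆ B`, i.e. of an `X` such that every `a ∈ A` is `E`-related to some `b ∈ X`. -/
noncomputable def evalTriple {A B : Type u} (E : A → B → Prop) : Cardinal.{u} :=
  sInf {c | ∃ X : Set B, #X = c ∧ ∀ a : A, ∃ b ∈ X, E a b}

/-- The eventual domination relation `f ≤* g` on `ω^ω`. -/
def evDomLE (f g : ℕ → ℕ) : Prop := ∀ᶠ n in Filter.atTop, f n ≤ g n

/-- The rational interval `(qₙ − √2/k, qₙ + √2/k) ∩ ℚ`. -/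
noncomputable def Jaux (q : ℕ → ℚ) (n k : ℕ) : Set ℚ :=
  {x : ℚ | (q n : ℝ) - Real.sqrt 2 / k < (x : ℝ) ∧ (x : ℝ) < (q n : ℝ) + Real.sqrt 2 / k}

/-- The least (positive) `k` ensuring that `q m ∉ Jₙ` for every `m ≤ f n` with `m ≠ n`. -/
noncomputable def kleast (q : ℕ → ℚ) (f : ℕ → ℕ) (n : ℕ) : ℕ :=
  sInf {k : ℕ | 0 < k ∧ ∀ m ≤ f n, m ≠ n → q m ∉ Jaux q n k}

/-- The interval `Jₙ^f = (qₙ − √2/k, qₙ + √2/k) ∩ ℚ` with `k` least as above. -/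
noncomputable def Jset (q : ℕ → ℚ) (f : ℕ → ℕ) (n : ℕ) : Set ℚ :=
  Jaux q n (kleast q f n)

/-- The shrinking of `X ⊆ ℚ` controlled by `f`: `shr(X,f) = ℚ ∖ ⋃_{qₙ ∉ X} Jₙ^f`. -/
noncomputable def shrink (q : ℕ → ℚ) (X : Set ℚ) (f : ℕ → ℕ) : Set ℚ :=
  (⋃ n ∈ {n : ℕ | q n ∉ X}, Jset q f n)ᶜ

/-- A set `X ⊆ ℚ` is crowded if it has no isolated points: every point of `X` is in the
closure of `X` minus that point. -/
def Crowded (X : Set ℚ) : Prop := ∀ x ∈ X, x ∈ closure (X \ {x})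

/-- A set `X ⊆ ℚ` is unbounded above. -/
def UnbAbove (X : Set ℚ) : Prop := ∀ r : ℚ, ∃ x ∈ X, r < x

/-- The recursive definition of the "fast-enough-growing function" `f_X` of `X ⊆ ℚ`. -/
noncomputable def fX (q : ℕ → ℚ) (X : Set ℚ) : ℕ → ℕ
  | 0 => sInf {k | q k ∈ X}
  | n + 1 => sInf {k | fX q X n < k ∧
      (∀ i ≤ n, q i ∈ X → ∃ j ≤ k, fX q X n < j ∧ q j ∈ X ∧
        |q i - q j| < (1 : ℚ) / 2 ^ n ∧ q j ∉ ⋃ l ∈ Set.Ioc i n, Jset q id l) ∧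
      (∃ i ≤ k, fX q X n < i ∧ q i ∈ X ∧ ((n : ℚ) + 1) < q i ∧
        q i ∉ ⋃ l ∈ Set.Iic n, Jset q id l)}

/-- `M(X)`: the maximal crowded subset of `X ⊆ ℚ` (the union of all crowded subsets). -/
def Mx (X : Set ℚ) : Set ℚ := ⋃₀ {S : Set ℚ | S ⊆ X ∧ Crowded S}

/-- The fast-enough-growing function of `X ⊆ ℚ`: constantly `0` unless `X` is crowded
and unbounded above, in which case it is given by the recursion `fX`. -/
noncomputable def fgrowQ (q : ℕ → ℚ) (X : Set ℚ) : ℕ → ℕ := by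
  classical exact if Crowded X ∧ UnbAbove X then fX q X else fun _ => 0

/-- The family `ℱ_{gruff} = {F_c, F_m, F_f, F_s, F_i}` of finitary operations on `ω^ω`,
relative to the coding functions `cd : ω^ω → 𝔓(ℚ)` and `dcd : 𝔓(ℚ) → ω^ω`. -/
noncomputable def GruffOps (q : ℕ → ℚ) (cd : (ℕ → ℕ) → Set ℚ)
    (dcd : Set ℚ → (ℕ → ℕ)) : Set (Σ n : ℕ, (Fin n → (ℕ → ℕ)) → (ℕ → ℕ)) :=
  {⟨1, fun v => dcd (cd (v 0))ᶜ⟩,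
   ⟨1, fun v => dcd (Mx (cd (v 0)))⟩,
   ⟨1, fun v => fgrowQ q (cd (v 0))⟩,
   ⟨2, fun v => dcd (shrink q (cd (v 0)) (v 1))⟩,
   ⟨2, fun v => dcd (cd (v 0) ∩ cd (v 1))⟩}

section CrowdedLemmas

lemma crowded_iff {X : Set ℚ} :
    Crowded X ↔ ∀ x ∈ X, ∀ ε : ℝ, 0 < ε → ∃ y ∈ X, y ≠ x ∧ |(y : ℝ) - x| < ε := by
  constructor
  · intro h x hx ε hε
    obtain ⟨b, hb, hd⟩ := Metric.mem_closure_iff.1 (h x hx) ε hε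
    exact ⟨b, hb.1, fun hbx => hb.2 (by simp [hbx]), by
      rw [Rat.dist_eq] at hd; rw [abs_sub_comm]; exact hd⟩
  · intro h x hx
    rw [Metric.mem_closure_iff]
    intro ε hε
    obtain ⟨y, hy, hyx, hd⟩ := h x hx ε hε
    exact ⟨y, ⟨hy, by simp [hyx]⟩, by rw [Rat.dist_eq, abs_sub_comm]; exact hd⟩

lemma crowded_univ : Crowded (univ : Set ℚ) := by
  rw [crowded_iff]
  intro x _ ε hε
  obtain ⟨r, hr0, hrε⟩ := exists_rat_btwn (half_pos hε)
  have hr0' : (0:ℚ) < r := by exact_mod_cast hr0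
  refine ⟨x + r, mem_univ _, by intro h; apply absurd h; simp; exact ne_of_gt hr0', ?_⟩
  have heq : |((x + r : ℚ) : ℝ) - (x:ℝ)| = (r:ℝ) := by
    push_cast
    rw [show (x:ℝ) + (r:ℝ) - (x:ℝ) = (r:ℝ) by ring, abs_of_pos hr0]
  rw [heq]; linarith

lemma crowded_inter_isOpen {X O : Set ℚ} (hX : Crowded X) (hO : IsOpen O) :
    Crowded (X ∩ O) := by
  rw [crowded_iff] at hX ⊢
  intro x ⟨hxX, hxO⟩ ε hε
  obtain ⟨ε₀, hε₀, hball⟩ := Metric.isOpen_iff.1 hO x hxO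
  obtain ⟨y, hy, hyx, hd⟩ := hX x hxX (min ε ε₀) (lt_min hε hε₀)
  refine ⟨y, ⟨hy, hball ?_⟩, hyx, hd.trans_le (min_le_left _ _)⟩
  rw [Metric.mem_ball, Rat.dist_eq]
  exact lt_of_lt_of_le hd (min_le_right _ _)

lemma mx_subset (X : Set ℚ) : Mx X ⊆ X :=
  sUnion_subset fun _ hS => hS.1

lemma crowded_mx (X : Set ℚ) : Crowded (Mx X) := by
  intro x hx
  obtain ⟨S, ⟨hSX, hS⟩, hxS⟩ := hx
  exact closure_mono (diff_subset_diff_left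
    (subset_sUnion_of_mem (show S ∈ {S : Set ℚ | S ⊆ X ∧ Crowded S} from ⟨hSX, hS⟩))) (hS x hxS)

lemma subset_mx {S X : Set ℚ} (h : S ⊆ X) (hS : Crowded S) : S ⊆ Mx X :=
  subset_sUnion_of_mem (show S ∈ {S : Set ℚ | S ⊆ X ∧ Crowded S} from ⟨h, hS⟩)

lemma mx_mono {X Y : Set ℚ} (h : X ⊆ Y) : Mx X ⊆ Mx Y :=
  sUnion_subset fun S hS => subset_mx (hS.1.trans h) hS.2

lemma unbAbove_mono {A B : Set ℚ} (h : A ⊆ B) (hA : UnbAbove A) : UnbAbove B :=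
  fun r => (hA r).imp fun x ⟨hx, hr⟩ => ⟨h hx, hr⟩

lemma unbAbove_nonempty {A : Set ℚ} (hA : UnbAbove A) : A.Nonempty :=
  (hA 0).imp fun _ h => h.1

lemma dichotomy0 {C A B : Set ℚ} (hC : Crowded C) (hne : C.Nonempty) (hsub : C ⊆ A ∪ B) :
    (∃ D : Set ℚ, D.Nonempty ∧ Crowded D ∧ D ⊆ A) ∨
      (∃ D : Set ℚ, D.Nonempty ∧ Crowded D ∧ D ⊆ B) := by
  by_cases hA : ∃ D : Set ℚ, D.Nonempty ∧ Crowded D ∧ D ⊆ A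
  · exact Or.inl hA
  right
  push_neg at hA
  by_cases hCA : (C ∩ A).Nonempty
  · have hnotcr : ¬ Crowded (C ∩ A) := fun h => hA _ hCA h inter_subset_right
    rw [crowded_iff] at hnotcr
    push_neg at hnotcr
    obtain ⟨x, hxCA, ε, hε, hiso⟩ := hnotcr
    -- D := (C ∩ ball x ε) \ {x}
    refine ⟨(C ∩ {z : ℚ | |(z:ℝ) - x| < ε}) \ {x}, ?_, ?_, ?_⟩
    · rw [crowded_iff] at hC
      obtain ⟨y, hy, hyx, hd⟩ := hC x hxCA.1 ε hε
      exact ⟨y, ⟨⟨hy, hd⟩, by simpa using hyx⟩⟩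
    · rw [crowded_iff]
      rintro y ⟨⟨hyC, hyb⟩, hyx⟩
      intro ε' hε'
      have hyx' : y ≠ x := by simpa using hyx
      have hdyx : (0:ℝ) < |(y:ℝ) - x| := by
        rw [abs_pos, sub_ne_zero]
        exact_mod_cast hyx'
      rw [crowded_iff] at hC
      have hybs : |(y:ℝ) - x| < ε := hyb
      obtain ⟨b, hbC, hby, hd⟩ := hC y hyC (min ε' (min (ε - |(y:ℝ) - x|) (|(y:ℝ) - x|)))
        (lt_min hε' (lt_min (by linarith) hdyx))
      refine ⟨b, mem_diff_singleton.mpr ⟨mem_inter hbC ?_, ?_⟩, hby,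
        hd.trans_le (min_le_left _ _)⟩
      · simp only [mem_setOf_eq]
        have h1 : |(b:ℝ) - y| < ε - |(y:ℝ) - x| :=
          hd.trans_le ((min_le_right _ _).trans (min_le_left _ _))
        calc |(b:ℝ) - x| ≤ |(b:ℝ) - y| + |(y:ℝ) - x| := abs_sub_le _ _ _
          _ < ε := by linarith
      · intro hbx
        have h2 : |(b:ℝ) - y| < |(y:ℝ) - x| :=
          hd.trans_le ((min_le_right _ _).trans (min_le_right _ _))
        rw [hbx, abs_sub_comm] at h2
        exact absurd h2 (lt_irrefl _)
    · rintro z ⟨⟨hzC, hzb⟩, hzx⟩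
      rcases hsub hzC with hzA | hzB
      · exfalso
        have := hiso z ⟨hzC, hzA⟩ (by simpa using hzx)
        have hzb' : |(z:ℝ) - x| < ε := hzb
        linarith
      · exact hzB
  · exact ⟨C, hne, hC, fun x hx => (hsub hx).resolve_left fun hxA => hCA ⟨x, hx, hxA⟩⟩

lemma dichotomy {C A B : Set ℚ} (hC : Crowded C) (hCu : UnbAbove C) (hsub : C ⊆ A ∪ B) :
    UnbAbove (Mx A) ∨ UnbAbove (Mx B) := by
  by_contra h
  push_neg at h
  obtain ⟨hA, hB⟩ := h
  simp only [UnbAbove, not_forall, not_exists, not_and, not_lt] at hA hB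
  obtain ⟨rA, hrA⟩ := hA
  obtain ⟨rB, hrB⟩ := hB
  set r := max rA rB with hr
  have hopen : IsOpen {z : ℚ | r < z} := by
    have : {z : ℚ | r < z} = Ioi r := rfl
    rw [this]; exact isOpen_Ioi
  have hC' : Crowded (C ∩ {z : ℚ | r < z}) := crowded_inter_isOpen hC hopen
  obtain ⟨x, hx, hrx⟩ := hCu r
  have hne : (C ∩ {z : ℚ | r < z}).Nonempty := ⟨x, hx, hrx⟩
  have hsub' : C ∩ {z : ℚ | r < z} ⊆ (A ∩ {z : ℚ | r < z}) ∪ (B ∩ {z : ℚ | r < z}) := by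
    rintro z ⟨hzC, hzr⟩
    rcases hsub hzC with h | h
    · exact Or.inl ⟨h, hzr⟩
    · exact Or.inr ⟨h, hzr⟩
  rcases dichotomy0 hC' hne hsub' with ⟨D, ⟨d, hd⟩, hDcr, hDsub⟩ | ⟨D, ⟨d, hd⟩, hDcr, hDsub⟩
  · have h1 : d ≤ rA := hrA d (subset_mx (hDsub.trans inter_subset_left) hDcr hd)
    have h2 : r < d := (hDsub hd).2
    have h3 : rA ≤ r := le_max_left rA rB
    exact absurd (h2.trans_le (h1.trans h3)) (lt_irrefl _)
  · have h1 : d ≤ rB := hrB d (subset_mx (hDsub.trans inter_subset_left) hDcr hd)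
    have h2 : r < d := (hDsub hd).2
    have h3 : rB ≤ r := le_max_right rA rB
    exact absurd (h2.trans_le (h1.trans h3)) (lt_irrefl _)

end CrowdedLemmas

section JsetLemmas

variable {q : ℕ → ℚ}

lemma sqrt2_pos : (0:ℝ) < Real.sqrt 2 := Real.sqrt_pos.2 (by norm_num)

lemma sqrt2_lt_two : Real.sqrt 2 < 2 := by
  have h := Real.sq_sqrt (by norm_num : (2:ℝ) ≥ 0)
  nlinarith [sqrt2_pos, h]

lemma mem_jaux {x : ℚ} {n k : ℕ} :
    x ∈ Jaux q n k ↔ |(x:ℝ) - (q n : ℝ)| < Real.sqrt 2 / k := by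
  rw [Jaux, mem_setOf_eq, abs_lt]
  constructor <;> intro h <;> constructor <;> linarith [h.1, h.2]

lemma jaux_anti {n k k' : ℕ} (h0 : 0 < k) (hkk : k ≤ k') : Jaux q n k' ⊆ Jaux q n k := by
  intro x hx
  rw [mem_jaux] at hx ⊢
  refine hx.trans_le (div_le_div_of_nonneg_left (le_of_lt sqrt2_pos) ?_ ?_)
  · exact_mod_cast h0
  · exact_mod_cast hkk

lemma kleast_set_nonempty (hq : Function.Injective q) (f : ℕ → ℕ) (n : ℕ) :
    {k : ℕ | 0 < k ∧ ∀ m ≤ f n, m ≠ n → q m ∉ Jaux q n k}.Nonempty := by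
  classical
  set M : Finset ℕ := (Finset.range (f n + 1)).filter (fun m => m ≠ n) with hM
  by_cases hMne : M.Nonempty
  · set d : ℝ := M.inf' hMne (fun m => |(q m : ℝ) - (q n : ℝ)|) with hd
    have hdpos : 0 < d := by
      rw [hd, Finset.lt_inf'_iff]
      intro m hm
      rw [abs_pos, sub_ne_zero]
      have : m ≠ n := (Finset.mem_filter.1 hm).2
      exact_mod_cast fun hc => this (hq hc)
    obtain ⟨k, hk⟩ := exists_nat_gt (Real.sqrt 2 / d)
    refine ⟨max k 1, lt_of_lt_of_le one_pos (le_max_right _ _), ?_⟩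
    intro m hm hmn hmem
    rw [mem_jaux] at hmem
    have hmM : m ∈ M := Finset.mem_filter.2 ⟨Finset.mem_range.2 (by omega), hmn⟩
    have hdm : d ≤ |(q m : ℝ) - (q n : ℝ)| := Finset.inf'_le _ hmM
    have hk1 : (k:ℝ) ≤ (max k 1 : ℕ) := by exact_mod_cast le_max_left k 1
    have hkpos : (0:ℝ) < (max k 1 : ℕ) := by
      have : (1:ℕ) ≤ max k 1 := le_max_right _ _
      exact_mod_cast lt_of_lt_of_le one_pos this
    have h1 : Real.sqrt 2 / (max k 1 : ℕ) ≤ Real.sqrt 2 / k ∨ True := Or.inr trivial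
    -- √2/d < k ≤ max k 1  ⇒  √2 < d * (max k 1) ⇒ √2/(max k 1) < d
    have h2 : Real.sqrt 2 / d < (max k 1 : ℕ) := lt_of_lt_of_le hk hk1
    have h3 : Real.sqrt 2 < d * (max k 1 : ℕ) := by
      rw [div_lt_iff₀ hdpos] at h2; linarith [h2]
    have h4 : Real.sqrt 2 / (max k 1 : ℕ) < d := by
      rw [div_lt_iff₀ hkpos]; linarith
    linarith [hmem.trans h4, hdm]
  · refine ⟨1, one_pos, ?_⟩
    intro m hm hmn _
    exact hMne ⟨m, Finset.mem_filter.2 ⟨Finset.mem_range.2 (by omega), hmn⟩⟩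

lemma kleast_mem (hq : Function.Injective q) (f : ℕ → ℕ) (n : ℕ) :
    0 < kleast q f n ∧ ∀ m ≤ f n, m ≠ n → q m ∉ Jaux q n (kleast q f n) :=
  Nat.sInf_mem (kleast_set_nonempty hq f n)

lemma kleast_pos (hq : Function.Injective q) (f : ℕ → ℕ) (n : ℕ) : 0 < kleast q f n :=
  (kleast_mem hq f n).1

lemma kleast_spec (hq : Function.Injective q) {f : ℕ → ℕ} {m n : ℕ}
    (h1 : m ≤ f n) (h2 : m ≠ n) : q m ∉ Jset q f n :=
  (kleast_mem hq f n).2 m h1 h2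

lemma mem_jset_self (hq : Function.Injective q) (f : ℕ → ℕ) (n : ℕ) : q n ∈ Jset q f n := by
  rw [Jset, mem_jaux, sub_self, abs_zero]
  apply div_pos sqrt2_pos
  exact_mod_cast kleast_pos hq f n

lemma jset_anti (hq : Function.Injective q) {f g : ℕ → ℕ} {n : ℕ} (h : g n ≤ f n) :
    Jset q f n ⊆ Jset q g n := by
  have hsub : {k : ℕ | 0 < k ∧ ∀ m ≤ f n, m ≠ n → q m ∉ Jaux q n k} ⊆
      {k : ℕ | 0 < k ∧ ∀ m ≤ g n, m ≠ n → q m ∉ Jaux q n k} := by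
    rintro k ⟨hk0, hk⟩
    exact ⟨hk0, fun m hm hmn => hk m (hm.trans h) hmn⟩
  have hle : kleast q g n ≤ kleast q f n :=
    Nat.sInf_le (hsub (Nat.sInf_mem (kleast_set_nonempty hq f n)))
  exact jaux_anti (kleast_pos hq g n) hle

lemma exists_eps_notmem (hq : Function.Injective q) {x : ℚ} {n : ℕ} {g : ℕ → ℕ}
    (hx : x ∉ Jset q g n) :
    ∃ ε : ℝ, 0 < ε ∧ ∀ y : ℚ, |(y:ℝ) - (x:ℝ)| < ε → y ∉ Jset q g n := by
  set k := kleast q g n with hk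
  have hkpos : 0 < k := kleast_pos hq g n
  have hirr : Irrational (Real.sqrt 2 / k) := irrational_sqrt_two.div_natCast (by omega)
  rw [Jset, Jaux, mem_setOf_eq, not_and_or, not_lt, not_lt] at hx
  rcases hx with hx | hx
  · -- x ≤ qn − √2/k, and ≠ since irrational
    have hne : (x:ℝ) ≠ (q n : ℝ) - Real.sqrt 2 / k := by
      intro hc
      have : Irrational ((q n : ℝ) - Real.sqrt 2 / k) := by
        have := hirr.ratCast_sub (q n)  -- Irrational (qn - √2/k)? check direction
        exact this
      rw [← hc] at this
      exact this ⟨x, rfl⟩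
    have hlt : (x:ℝ) < (q n : ℝ) - Real.sqrt 2 / k := lt_of_le_of_ne hx hne
    refine ⟨(q n : ℝ) - Real.sqrt 2 / k - x, by linarith, ?_⟩
    intro y hy hymem
    rw [Jset, Jaux, mem_setOf_eq] at hymem
    have : (y:ℝ) - x ≤ |(y:ℝ) - x| := le_abs_self _
    linarith [hymem.1]
  · have hne : (x:ℝ) ≠ (q n : ℝ) + Real.sqrt 2 / k := by
      intro hc
      have : Irrational ((q n : ℝ) + Real.sqrt 2 / k) := hirr.ratCast_add (q n)
      rw [← hc] at this
      exact this ⟨x, rfl⟩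
    have hlt : (q n : ℝ) + Real.sqrt 2 / k < x := lt_of_le_of_ne hx (Ne.symm hne)
    refine ⟨(x:ℝ) - ((q n : ℝ) + Real.sqrt 2 / k), by linarith, ?_⟩
    intro y hy hymem
    rw [Jset, Jaux, mem_setOf_eq] at hymem
    have : (x:ℝ) - y ≤ |(y:ℝ) - x| := by rw [abs_sub_comm]; exact le_abs_self _
    linarith [hymem.2]

lemma exists_eps_notmem_union (hq : Function.Injective q) {x : ℚ} {g : ℕ → ℕ}
    (L : Finset ℕ) (hx : ∀ l ∈ L, x ∉ Jset q g l) :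
    ∃ ε : ℝ, 0 < ε ∧ ∀ y : ℚ, |(y:ℝ) - (x:ℝ)| < ε → ∀ l ∈ L, y ∉ Jset q g l := by
  classical
  induction L using Finset.induction_on with
  | empty => exact ⟨1, one_pos, fun y _ l hl => absurd hl (Finset.notMem_empty l)⟩
  | @insert a s ha ih =>
    obtain ⟨ε₁, hε₁, h1⟩ := exists_eps_notmem hq (hx a (Finset.mem_insert_self a s))
    obtain ⟨ε₂, hε₂, h2⟩ := ih (fun l hl => hx l (Finset.mem_insert_of_mem hl))
    refine ⟨min ε₁ ε₂, lt_min hε₁ hε₂, ?_⟩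
    intro y hy l hl
    rcases Finset.mem_insert.1 hl with rfl | hl
    · exact h1 y (hy.trans_le (min_le_left _ _))
    · exact h2 y (hy.trans_le (min_le_right _ _)) l hl

end JsetLemmas

section IndexLemmas

variable {q : ℕ → ℚ}

lemma crowded_exists_index (hq : Function.Bijective q) {X : Set ℚ} (hX : Crowded X)
    {x : ℚ} (hx : x ∈ X) {ε : ℝ} (hε : 0 < ε) (N : ℕ) :
    ∃ j, N < j ∧ q j ∈ X ∧ q j ≠ x ∧ |(q j : ℝ) - (x:ℝ)| < ε := by
  classical
  set M : Finset ℕ := (Finset.range (N + 1)).filter (fun m => q m ≠ x) with hM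
  have hεx : ∃ ε' : ℝ, 0 < ε' ∧ ε' ≤ ε ∧ ∀ m ∈ M, ε' ≤ |(q m : ℝ) - (x:ℝ)| := by
    by_cases hMne : M.Nonempty
    · set d := M.inf' hMne (fun m => |(q m : ℝ) - (x:ℝ)|) with hd
      have hdpos : 0 < d := by
        rw [hd, Finset.lt_inf'_iff]
        intro m hm
        rw [abs_pos, sub_ne_zero]
        exact_mod_cast (Finset.mem_filter.1 hm).2
      exact ⟨min ε d, lt_min hε hdpos, min_le_left _ _,
        fun m hm => (min_le_right ε d).trans (Finset.inf'_le _ hm)⟩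
    · exact ⟨ε, hε, le_refl _, fun m hm => absurd ⟨m, hm⟩ hMne⟩
  obtain ⟨ε', hε'pos, hε'le, hε'sep⟩ := hεx
  rw [crowded_iff] at hX
  obtain ⟨y, hyX, hyx, hyd⟩ := hX x hx ε' hε'pos
  obtain ⟨j, rfl⟩ := hq.2 y
  refine ⟨j, ?_, hyX, hyx, hyd.trans_le hε'le⟩
  by_contra hjN
  push_neg at hjN
  have hjM : j ∈ M := Finset.mem_filter.2 ⟨Finset.mem_range.2 (by omega), hyx⟩
  exact absurd hyd (not_lt.2 (hε'sep j hjM))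

lemma unb_exists_index (hq : Function.Bijective q) {X : Set ℚ} (hX : UnbAbove X)
    (r : ℚ) (N : ℕ) :
    ∃ i, N < i ∧ q i ∈ X ∧ r < q i := by
  classical
  set r' : ℚ := max r (((Finset.range (N + 1)).image q).max' (by simp)) with hr'
  obtain ⟨x, hxX, hxr⟩ := hX r'
  obtain ⟨i, rfl⟩ := hq.2 x
  refine ⟨i, ?_, hxX, lt_of_le_of_lt (le_max_left _ _) hxr⟩
  by_contra hiN
  push_neg at hiN
  have : q i ≤ r' := by
    rw [hr']
    exact le_max_of_le_right (Finset.le_max' _ _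
      (Finset.mem_image.2 ⟨i, Finset.mem_range.2 (by omega), rfl⟩))
  exact absurd (lt_of_le_of_lt this hxr) (lt_irrefl _)

end IndexLemmas

section FXLemmas

variable {q : ℕ → ℚ} {X : Set ℚ}

/-- Points of `X` beyond all the bounded intervals `J_l^id`, `l ≤ n`, with large index. -/
lemma exists_pt_beyond (hq : Function.Bijective q) (hub : UnbAbove X) (n N : ℕ) (r : ℚ) :
    ∃ i, N < i ∧ q i ∈ X ∧ r < q i ∧ (n:ℚ) + 1 < q i ∧
      q i ∉ ⋃ l ∈ Set.Iic n, Jset q id l := by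
  classical
  set r' : ℚ := max (max r ((n:ℚ)+1)) (((Finset.range (n + 1)).image q).max' (by simp) + 2)
    with hr'
  obtain ⟨i, hiN, hiX, hir⟩ := unb_exists_index hq hub r' N
  refine ⟨i, hiN, hiX, lt_of_le_of_lt (le_trans (le_max_left _ _) (le_max_left _ _)) hir,
    lt_of_le_of_lt (le_trans (le_max_right _ _) (le_max_left _ _)) hir, ?_⟩
  intro hmem
  simp only [mem_iUnion, exists_prop] at hmem
  obtain ⟨l, hl, hmem⟩ := hmem
  rw [Set.mem_Iic] at hl
  rw [Jset, mem_jaux] at hmem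
  have hklpos : (1:ℝ) ≤ (kleast q id l : ℝ) := by
    exact_mod_cast kleast_pos hq.1 id l
  have hrad : Real.sqrt 2 / (kleast q id l : ℝ) ≤ 2 := by
    calc Real.sqrt 2 / (kleast q id l : ℝ) ≤ Real.sqrt 2 / 1 :=
          div_le_div_of_nonneg_left (le_of_lt sqrt2_pos) one_pos hklpos
      _ ≤ 2 := by rw [div_one]; exact le_of_lt sqrt2_lt_two
  have hql : q l ≤ ((Finset.range (n + 1)).image q).max' (by simp) :=
    Finset.le_max' _ _ (Finset.mem_image.2 ⟨l, Finset.mem_range.2 (by omega), rfl⟩)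
  have h2 : ((Finset.range (n + 1)).image q).max' (by simp) + 2 ≤ r' := le_max_right _ _
  have h3 : (q i : ℝ) - (q l : ℝ) ≤ |(q i : ℝ) - (q l : ℝ)| := le_abs_self _
  have h4 : (q l : ℚ) + 2 ≤ r' := by
    calc q l + 2 ≤ ((Finset.range (n + 1)).image q).max' (by simp) + 2 := by linarith
      _ ≤ r' := h2
  have h5 : (q l : ℝ) + 2 < (q i : ℝ) := by
    have : (q l + 2 : ℚ) < q i := lt_of_le_of_lt h4 hir
    exact_mod_cast this
  linarith [hmem, h3, hrad]

lemma fx_zero_mem (hq : Function.Bijective q) (hub : UnbAbove X) : q (fX q X 0) ∈ X := by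
  have hne : {k | q k ∈ X}.Nonempty := by
    obtain ⟨x, hx, _⟩ := hub 0
    obtain ⟨k, rfl⟩ := hq.2 x
    exact ⟨k, hx⟩
  exact Nat.sInf_mem hne

lemma fx_succ_spec (hq : Function.Bijective q) (hcr : Crowded X) (hub : UnbAbove X) (n : ℕ) :
    fX q X n < fX q X (n+1) ∧
      (∀ i ≤ n, q i ∈ X → ∃ j ≤ fX q X (n+1), fX q X n < j ∧ q j ∈ X ∧
        |q i - q j| < (1 : ℚ) / 2 ^ n ∧ q j ∉ ⋃ l ∈ Set.Ioc i n, Jset q id l) ∧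
      (∃ i ≤ fX q X (n+1), fX q X n < i ∧ q i ∈ X ∧ ((n : ℚ) + 1) < q i ∧
        q i ∉ ⋃ l ∈ Set.Iic n, Jset q id l) := by
  classical
  have hne : {k | fX q X n < k ∧
      (∀ i ≤ n, q i ∈ X → ∃ j ≤ k, fX q X n < j ∧ q j ∈ X ∧
        |q i - q j| < (1 : ℚ) / 2 ^ n ∧ q j ∉ ⋃ l ∈ Set.Ioc i n, Jset q id l) ∧
      (∃ i ≤ k, fX q X n < i ∧ q i ∈ X ∧ ((n : ℚ) + 1) < q i ∧
        q i ∉ ⋃ l ∈ Set.Iic n, Jset q id l)}.Nonempty := by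
    -- (ii)-witness
    obtain ⟨i₂, hi₂N, hi₂X, _, hi₂big, hi₂avoid⟩ :=
      exists_pt_beyond hq hub n (fX q X n) 0
    -- (i)-witnesses
    have H : ∀ i, ∃ j, i ≤ n → q i ∈ X → (fX q X n < j ∧ q j ∈ X ∧
        |q i - q j| < (1 : ℚ) / 2 ^ n ∧ q j ∉ ⋃ l ∈ Set.Ioc i n, Jset q id l) := by
      intro i
      by_cases hi : i ≤ n ∧ q i ∈ X
      · -- q i avoids the J_l^id for l ∈ Ioc i n
        have havoid : ∀ l ∈ Finset.Ioc i n, q i ∉ Jset q id l := by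
          intro l hl
          rw [Finset.mem_Ioc] at hl
          exact kleast_spec hq.1 (le_of_lt hl.1) (ne_of_lt hl.1)
        obtain ⟨ε, hεpos, hεav⟩ := exists_eps_notmem_union hq.1 (Finset.Ioc i n) havoid
        have hpow : (0:ℝ) < ((1 : ℚ) / 2 ^ n : ℚ) := by positivity
        obtain ⟨j, hjN, hjX, hjne, hjd⟩ :=
          crowded_exists_index hq hcr hi.2 (lt_min hεpos hpow) (fX q X n)
        refine ⟨j, fun _ _ => ⟨hjN, hjX, ?_, ?_⟩⟩
        · have : |(q j : ℝ) - (q i : ℝ)| < ((1 : ℚ) / 2 ^ n : ℚ) :=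
            lt_of_lt_of_le hjd (min_le_right _ _)
          rw [abs_sub_comm] at this
          have h2 : |(q i : ℚ) - q j| < (1 : ℚ) / 2 ^ n := by
            have hcast : |((q i - q j : ℚ) : ℝ)| < (((1 : ℚ) / 2 ^ n : ℚ) : ℝ) := by
              push_cast
              push_cast at this
              exact this
            rw [← Rat.cast_abs] at hcast
            exact_mod_cast hcast
          exact h2
        · intro hmem
          simp only [mem_iUnion, exists_prop] at hmem
          obtain ⟨l, hl, hmem⟩ := hmem
          rw [Set.mem_Ioc] at hl
          exact hεav (q j) (lt_of_lt_of_le hjd (min_le_left _ _)) l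
            (Finset.mem_Ioc.2 hl) hmem
      · exact ⟨0, fun h1 h2 => absurd ⟨h1, h2⟩ hi⟩
    choose jf hjf using H
    refine ⟨max (max (fX q X n + 1) i₂) ((Finset.range (n+1)).sup jf), ?_, ?_, ?_⟩
    · have : fX q X n + 1 ≤ max (max (fX q X n + 1) i₂) ((Finset.range (n+1)).sup jf) :=
        le_trans (le_max_left _ _) (le_max_left _ _)
      omega
    · intro i hi hiX
      refine ⟨jf i, ?_, hjf i hi hiX⟩
      exact le_trans (Finset.le_sup (Finset.mem_range.2 (by omega))) (le_max_right _ _)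
    · exact ⟨i₂, le_trans (le_max_right _ _) (le_max_left _ _), hi₂N, hi₂X, hi₂big, hi₂avoid⟩
  have := Nat.sInf_mem hne
  rw [show sInf {k | fX q X n < k ∧
      (∀ i ≤ n, q i ∈ X → ∃ j ≤ k, fX q X n < j ∧ q j ∈ X ∧
        |q i - q j| < (1 : ℚ) / 2 ^ n ∧ q j ∉ ⋃ l ∈ Set.Ioc i n, Jset q id l) ∧
      (∃ i ≤ k, fX q X n < i ∧ q i ∈ X ∧ ((n : ℚ) + 1) < q i ∧
        q i ∉ ⋃ l ∈ Set.Iic n, Jset q id l)} = fX q X (n+1) from rfl] at this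
  exact this

lemma fx_le_self (hq : Function.Bijective q) (hcr : Crowded X) (hub : UnbAbove X) (n : ℕ) :
    n ≤ fX q X n := by
  induction n with
  | zero => exact Nat.zero_le _
  | succ n ih =>
    have := (fx_succ_spec hq hcr hub n).1
    omega

end FXLemmas

section ShrinkLemmas

variable {q : ℕ → ℚ} {X : Set ℚ} {F : ℕ → ℕ}

lemma mem_shrink {y : ℚ} :
    y ∈ shrink q X F ↔ ∀ n, q n ∉ X → y ∉ Jset q F n := by
  simp only [shrink, mem_compl_iff, mem_iUnion, exists_prop, not_exists, not_and,
    mem_setOf_eq]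

lemma shrink_subset (hq : Function.Bijective q) : shrink q X F ⊆ X := by
  intro y hy
  obtain ⟨m, rfl⟩ := hq.2 y
  by_contra hmem
  exact mem_shrink.1 hy m hmem (mem_jset_self hq.1 F m)

lemma shrink_closed : IsClosed (shrink q X F) := by
  rw [shrink]
  apply isClosed_compl_iff.2
  apply isOpen_biUnion
  intro n _
  rw [Jset, Jaux]
  have : {x : ℚ | (q n : ℝ) - Real.sqrt 2 / (kleast q F n) < (x : ℝ) ∧
      (x : ℝ) < (q n : ℝ) + Real.sqrt 2 / (kleast q F n)} =
      (fun x : ℚ => (x : ℝ)) ⁻¹' (Set.Ioo ((q n : ℝ) - Real.sqrt 2 / (kleast q F n))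
        ((q n : ℝ) + Real.sqrt 2 / (kleast q F n))) := rfl
  rw [this]
  exact IsOpen.preimage (Rat.isUniformEmbedding_coe_real.uniformContinuous.continuous)
    isOpen_Ioo

lemma shrink_mono {X' : Set ℚ} (h : X ⊆ X') : shrink q X F ⊆ shrink q X' F := by
  intro y hy
  rw [mem_shrink] at hy ⊢
  intro n hn
  exact hy n (fun hc => hn (h hc))

lemma shrink_unbAbove (hq : Function.Bijective q) (hcr : Crowded X) (hub : UnbAbove X)
    (hFid : ∀ n, n ≤ F n) (hFmono : Monotone F)
    (hinf : ∀ N, ∃ n, N ≤ n ∧ fX q X (n+1) < F n) :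
    UnbAbove (shrink q X F) := by
  intro r
  obtain ⟨n, hnN, hnf⟩ := hinf ⌈r⌉₊
  obtain ⟨_, _, i, hik, hiN, hiX, hibig, hiavoid⟩ := fx_succ_spec hq hcr hub n
  refine ⟨q i, ?_, ?_⟩
  · rw [mem_shrink]
    intro m hm
    have hmi : m ≠ i := fun hc => hm (hc ▸ hiX)
    by_cases hmn : m ≤ n
    · intro hmem
      apply hiavoid
      simp only [mem_iUnion, exists_prop]
      exact ⟨m, Set.mem_Iic.2 hmn, jset_anti hq.1 (hFid m) hmem⟩
    · push_neg at hmn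
      have : i ≤ F m := by
        have h1 : F n ≤ F m := hFmono (le_of_lt hmn)
        omega
      exact kleast_spec hq.1 this (Ne.symm hmi)
  · have h1 : r ≤ (⌈r⌉₊ : ℚ) := Nat.le_ceil r
    have h2 : ((⌈r⌉₊:ℕ) : ℚ) ≤ (n : ℚ) := by exact_mod_cast hnN
    linarith [hibig]

lemma shrink_crowded (hq : Function.Bijective q) (hcr : Crowded X) (hub : UnbAbove X)
    (hFid : ∀ n, n ≤ F n) (hFmono : Monotone F)
    (hinf : ∀ N, ∃ n, N ≤ n ∧ fX q X (n+1) < F n) :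
    Crowded (shrink q X F) := by
  classical
  rw [crowded_iff]
  intro y hy ε hε
  obtain ⟨i₀, rfl⟩ := hq.2 y
  have hyX : q i₀ ∈ X := shrink_subset hq hy
  -- bad small indices
  set Bad : Finset ℕ := (Finset.range (i₀ + 1)).filter (fun m => q m ∉ X) with hBad
  have hBadav : ∀ m ∈ Bad, q i₀ ∉ Jset q F m := by
    intro m hm
    exact mem_shrink.1 hy m (Finset.mem_filter.1 hm).2
  obtain ⟨ε₁, hε₁pos, hε₁⟩ := exists_eps_notmem_union hq.1 Bad hBadav
  -- choose n large
  obtain ⟨N₁, hN₁⟩ := pow_unbounded_of_one_lt (1 / min ε ε₁) (one_lt_two (α := ℝ))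
  obtain ⟨n, hnN, hnf⟩ := hinf (max i₀ N₁)
  have hni₀ : i₀ ≤ n := le_trans (le_max_left _ _) hnN
  have hnN₁ : N₁ ≤ n := le_trans (le_max_right _ _) hnN
  have hpowlt : (1:ℝ) / 2 ^ n < min ε ε₁ := by
    have hmin : (0:ℝ) < min ε ε₁ := lt_min hε hε₁pos
    have h2 : (2:ℝ) ^ N₁ ≤ 2 ^ n := pow_le_pow_right₀ (by norm_num) hnN₁
    rw [div_lt_iff₀ (by positivity)]
    rw [div_lt_iff₀ hmin] at hN₁
    calc (1:ℝ) < min ε ε₁ * 2 ^ N₁ := by linarith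
      _ ≤ min ε ε₁ * 2 ^ n := by nlinarith [hmin]
  obtain ⟨_, hspec_i, _⟩ := fx_succ_spec hq hcr hub n
  obtain ⟨j, hjk, hjN, hjX, hjd, hjavoid⟩ := hspec_i i₀ hni₀ hyX
  have hji₀ : i₀ < j := lt_of_le_of_lt (le_trans hni₀ (fx_le_self hq hcr hub n)) hjN
  have hjdr : |(q j : ℝ) - (q i₀ : ℝ)| < (1:ℝ) / 2 ^ n := by
    have : ((|q i₀ - q j| : ℚ) : ℝ) < (((1:ℚ) / 2 ^ n : ℚ) : ℝ) := by exact_mod_cast hjd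
    rw [Rat.cast_abs] at this
    push_cast at this
    rw [abs_sub_comm]
    convert this using 2 <;> norm_num
  refine ⟨q j, ?_, ?_, ?_⟩
  · rw [mem_shrink]
    intro m hm
    have hmj : m ≠ j := fun hc => hm (hc ▸ hjX)
    rcases le_or_gt m i₀ with hmi | hmi
    · -- use distance to the finitely many bad intervals
      have hmBad : m ∈ Bad := Finset.mem_filter.2 ⟨Finset.mem_range.2 (by omega), hm⟩
      apply hε₁ (q j) _ m hmBad
      calc |(q j : ℝ) - (q i₀ : ℝ)| < (1:ℝ)/2^n := hjdr
        _ < min ε ε₁ := hpowlt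
        _ ≤ ε₁ := min_le_right _ _
    · rcases le_or_gt m n with hmn | hmn
      · intro hmem
        apply hjavoid
        simp only [mem_iUnion, exists_prop]
        exact ⟨m, Set.mem_Ioc.2 ⟨hmi, hmn⟩, jset_anti hq.1 (hFid m) hmem⟩
      · have : j ≤ F m := by
          have h1 : F n ≤ F m := hFmono (le_of_lt hmn)
          omega
        exact kleast_spec hq.1 this (Ne.symm hmj)
  · intro hc
    exact absurd (hq.1 hc) (by omega)
  · calc |(q j : ℝ) - (q i₀ : ℝ)| < (1:ℝ)/2^n := hjdr
      _ < min ε ε₁ := hpowlt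
      _ ≤ ε := min_le_left _ _

end ShrinkLemmas

section FiltMachinery

/-- a filter on a family of sets -/
def Filt (𝒜 U : Set (Set ℚ)) : Prop :=
  U ⊆ 𝒜 ∧ Set.univ ∈ U ∧ ∅ ∉ U ∧ (∀ Z ∈ U, ∀ Z' ∈ U, Z ∩ Z' ∈ U) ∧
    (∀ Z ∈ U, ∀ Y ∈ 𝒜, Z ⊆ Y → Y ∈ U)

def UltraOn (𝒜 U : Set (Set ℚ)) : Prop :=
  Filt 𝒜 U ∧ ∀ Y ∈ 𝒜, Y ∈ U ∨ Yᶜ ∈ U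

lemma exists_ultra {𝒜 : Set (Set ℚ)}
    (hAc : ∀ X ∈ 𝒜, Xᶜ ∈ 𝒜) (hAi : ∀ X ∈ 𝒜, ∀ Y ∈ 𝒜, X ∩ Y ∈ 𝒜)
    {I : Set (Set ℚ)} (hIdown : ∀ Y ∈ I, ∀ Y' ∈ 𝒜, Y' ⊆ Y → Y' ∈ I)
    (hIunion : ∀ Y ∈ I, ∀ Y' ∈ I, Y ∪ Y' ∈ I)
    {G : Set (Set ℚ)} (hG : Filt 𝒜 G) (hGI : ∀ W ∈ G, W ∉ I) :
    ∃ U, UltraOn 𝒜 U ∧ G ⊆ U ∧ ∀ Z ∈ U, Z ∉ I := by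
  classical
  set S : Set (Set (Set ℚ)) := {F | Filt 𝒜 F ∧ G ⊆ F ∧ ∀ Z ∈ F, Z ∉ I} with hS
  have hGS : G ∈ S := ⟨hG, subset_rfl, hGI⟩
  have hchain : ∀ c ⊆ S, IsChain (· ⊆ ·) c → c.Nonempty →
      ∃ ub ∈ S, ∀ s ∈ c, s ⊆ ub := by
    intro c hcS hchain ⟨F₀, hF₀⟩
    refine ⟨⋃₀ c, ⟨⟨?_, ?_, ?_, ?_, ?_⟩, ?_, ?_⟩, fun s hs => subset_sUnion_of_mem hs⟩
    · exact sUnion_subset fun F hF => (hcS hF).1.1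
    · exact ⟨F₀, hF₀, (hcS hF₀).1.2.1⟩
    · rintro ⟨F, hF, hmem⟩
      exact (hcS hF).1.2.2.1 hmem
    · rintro Z ⟨F, hF, hZ⟩ Z' ⟨F', hF', hZ'⟩
      rcases eq_or_ne F F' with rfl | hne
      · exact ⟨F, hF, (hcS hF).1.2.2.2.1 Z hZ Z' hZ'⟩
      · rcases hchain hF hF' hne with h | h
        · exact ⟨F', hF', (hcS hF').1.2.2.2.1 Z (h hZ) Z' hZ'⟩
        · exact ⟨F, hF, (hcS hF).1.2.2.2.1 Z hZ Z' (h hZ')⟩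
    · rintro Z ⟨F, hF, hZ⟩ Y hY hZY
      exact ⟨F, hF, (hcS hF).1.2.2.2.2 Z hZ Y hY hZY⟩
    · exact ((hcS hF₀).2.1).trans (subset_sUnion_of_mem hF₀)
    · rintro Z ⟨F, hF, hZ⟩
      exact (hcS hF).2.2 Z hZ
  obtain ⟨M, hGM, hMmax⟩ := zorn_subset_nonempty S hchain G hGS
  have hMS : M ∈ S := hMmax.1
  refine ⟨M, ⟨hMS.1, ?_⟩, hGM, hMS.2.2⟩
  intro Y hY
  by_contra hcon
  push_neg at hcon
  obtain ⟨hYM, hYcM⟩ := hcon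
  -- the extension of M by a set T (T = Y or Yᶜ) must meet the ideal I
  have hext : ∀ T ∈ 𝒜, T ∉ M → Tᶜ ∉ M → ∃ Z ∈ M, Z ∩ T ∈ I := by
    intro T hT hTM hTcM
    set M1 : Set (Set ℚ) := {W ∈ 𝒜 | ∃ Z ∈ M, Z ∩ T ⊆ W} with hM1
    have hMM1 : M ⊆ M1 := fun Z hZ => ⟨hMS.1.1 hZ, Z, hZ, inter_subset_left⟩
    have hTM1 : T ∈ M1 := ⟨hT, Set.univ, hMS.1.2.1, inter_subset_right⟩
    by_cases hI : ∀ W ∈ M1, W ∉ I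
    · -- then M1 would be a strictly larger element of S
      exfalso
      have hM1F : Filt 𝒜 M1 := by
        refine ⟨fun W hW => hW.1, hMM1 hMS.1.2.1, ?_, ?_, ?_⟩
        · rintro ⟨_, Z, hZM, hZT⟩
          have hZTc : Z ⊆ Tᶜ := by
            intro x hx
            by_contra hxT
            exact hZT ⟨hx, not_not.1 hxT⟩
          exact hTcM (hMS.1.2.2.2.2 Z hZM Tᶜ (hAc T hT) hZTc)
        · rintro W ⟨hWA, Z, hZM, hZT⟩ W' ⟨hW'A, Z', hZ'M, hZ'T⟩
          refine ⟨hAi W hWA W' hW'A, Z ∩ Z', hMS.1.2.2.2.1 Z hZM Z' hZ'M, ?_⟩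
          rintro x ⟨⟨hxZ, hxZ'⟩, hxT⟩
          exact ⟨hZT ⟨hxZ, hxT⟩, hZ'T ⟨hxZ', hxT⟩⟩
        · rintro W ⟨hWA, Z, hZM, hZT⟩ Y' hY'A hWY'
          exact ⟨hY'A, Z, hZM, hZT.trans hWY'⟩
      have hM1S : M1 ∈ S := ⟨hM1F, hGM.trans hMM1, hI⟩
      exact hTM (hMmax.2 hM1S hMM1 hTM1)
    · push_neg at hI
      obtain ⟨W, hWM1, hWI⟩ := hI
      obtain ⟨hWA, Z, hZM, hZTW⟩ := hWM1
      have hZT : Z ∩ T ∈ 𝒜 := hAi Z (hMS.1.1 hZM) T hT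
      exact ⟨Z, hZM, hIdown W hWI (Z ∩ T) hZT hZTW⟩
  obtain ⟨Z, hZM, hZI⟩ := hext Y hY hYM hYcM
  obtain ⟨Z', hZ'M, hZ'I⟩ := hext Yᶜ (hAc Y hY) hYcM (by rwa [compl_compl])
  have hZZ' : Z ∩ Z' ∈ M := hMS.1.2.2.2.1 Z hZM Z' hZ'M
  have hsub : Z ∩ Z' ⊆ (Z ∩ Y) ∪ (Z' ∩ Yᶜ) := by
    rintro x ⟨hxZ, hxZ'⟩
    by_cases hxY : x ∈ Y
    · exact Or.inl ⟨hxZ, hxY⟩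
    · exact Or.inr ⟨hxZ', hxY⟩
  have hZZ'A : Z ∩ Z' ∈ 𝒜 := hAi Z (hMS.1.1 hZM) Z' (hMS.1.1 hZ'M)
  have : Z ∩ Z' ∈ I := hIdown _ (hIunion _ hZI _ hZ'I) _ hZZ'A hsub
  exact hMS.2.2 _ hZZ' this

end FiltMachinery

noncomputable def SA (cd : (ℕ → ℕ) → Set ℚ) (seq : Ordinal → Set (ℕ → ℕ)) (ℓ : Ordinal) :
    Set (Set ℚ) := cd '' (seq ℓ)


section OpsClosure

variable {q : ℕ → ℚ} {cd : (ℕ → ℕ) → Set ℚ} {dcd : Set ℚ → ℕ → ℕ}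
variable {seq : Ordinal → Set (ℕ → ℕ)} {ℓ : Ordinal}

lemma SA_compl (hid : ∀ X : Set ℚ, cd (dcd X) = X)
    (hcf : ∀ F ∈ GruffOps q cd dcd, ClosedUnderOp (seq ℓ) F)
    {X : Set ℚ} (hX : X ∈ SA cd seq ℓ) : Xᶜ ∈ SA cd seq ℓ := by
  obtain ⟨h, hh, rfl⟩ := hX
  have hmem : (⟨1, fun v => dcd (cd (v 0))ᶜ⟩ : Σ n : ℕ, (Fin n → (ℕ → ℕ)) → (ℕ → ℕ)) ∈
      GruffOps q cd dcd := Set.mem_insert _ _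
  have := hcf _ hmem (fun _ => h) (fun _ => hh)
  exact ⟨_, this, hid _⟩

lemma SA_mx (hid : ∀ X : Set ℚ, cd (dcd X) = X)
    (hcf : ∀ F ∈ GruffOps q cd dcd, ClosedUnderOp (seq ℓ) F)
    {X : Set ℚ} (hX : X ∈ SA cd seq ℓ) : Mx X ∈ SA cd seq ℓ := by
  obtain ⟨h, hh, rfl⟩ := hX
  have hmem : (⟨1, fun v => dcd (Mx (cd (v 0)))⟩ : Σ n : ℕ, (Fin n → (ℕ → ℕ)) → (ℕ → ℕ)) ∈
      GruffOps q cd dcd := Set.mem_insert_of_mem _ (Set.mem_insert _ _)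
  have := hcf _ hmem (fun _ => h) (fun _ => hh)
  exact ⟨_, this, hid _⟩

lemma SA_fgrow (hcf : ∀ F ∈ GruffOps q cd dcd, ClosedUnderOp (seq ℓ) F)
    {X : Set ℚ} (hX : X ∈ SA cd seq ℓ) : fgrowQ q X ∈ seq ℓ := by
  obtain ⟨h, hh, rfl⟩ := hX
  have hmem : (⟨1, fun v => fgrowQ q (cd (v 0))⟩ : Σ n : ℕ, (Fin n → (ℕ → ℕ)) → (ℕ → ℕ)) ∈
      GruffOps q cd dcd :=
    Set.mem_insert_of_mem _ (Set.mem_insert_of_mem _ (Set.mem_insert _ _))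
  exact hcf _ hmem (fun _ => h) (fun _ => hh)

lemma SA_shrink (hid : ∀ X : Set ℚ, cd (dcd X) = X)
    (hcf : ∀ F ∈ GruffOps q cd dcd, ClosedUnderOp (seq ℓ) F)
    {X : Set ℚ} (hX : X ∈ SA cd seq ℓ) {F : ℕ → ℕ} (hF : F ∈ seq ℓ) :
    shrink q X F ∈ SA cd seq ℓ := by
  obtain ⟨h, hh, rfl⟩ := hX
  have hmem : (⟨2, fun v => dcd (shrink q (cd (v 0)) (v 1))⟩ :
      Σ n : ℕ, (Fin n → (ℕ → ℕ)) → (ℕ → ℕ)) ∈ GruffOps q cd dcd :=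
    Set.mem_insert_of_mem _ (Set.mem_insert_of_mem _ (Set.mem_insert_of_mem _
      (Set.mem_insert _ _)))
  have := hcf _ hmem ![h, F] (by
    intro i
    fin_cases i
    · exact hh
    · exact hF)
  exact ⟨_, this, hid _⟩

lemma SA_inter (hid : ∀ X : Set ℚ, cd (dcd X) = X)
    (hcf : ∀ F ∈ GruffOps q cd dcd, ClosedUnderOp (seq ℓ) F)
    {X Y : Set ℚ} (hX : X ∈ SA cd seq ℓ) (hY : Y ∈ SA cd seq ℓ) :
    X ∩ Y ∈ SA cd seq ℓ := by
  obtain ⟨g, hg, rfl⟩ := hX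
  obtain ⟨h, hh, rfl⟩ := hY
  have hmem : (⟨2, fun v => dcd (cd (v 0) ∩ cd (v 1))⟩ :
      Σ n : ℕ, (Fin n → (ℕ → ℕ)) → (ℕ → ℕ)) ∈ GruffOps q cd dcd :=
    Set.mem_insert_of_mem _ (Set.mem_insert_of_mem _ (Set.mem_insert_of_mem _
      (Set.mem_insert_of_mem _ rfl)))
  have := hcf _ hmem ![g, h] (by
    intro i
    fin_cases i
    · exact hg
    · exact hh)
  exact ⟨_, this, hid _⟩

lemma SA_union (hid : ∀ X : Set ℚ, cd (dcd X) = X)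
    (hcf : ∀ F ∈ GruffOps q cd dcd, ClosedUnderOp (seq ℓ) F)
    {X Y : Set ℚ} (hX : X ∈ SA cd seq ℓ) (hY : Y ∈ SA cd seq ℓ) :
    X ∪ Y ∈ SA cd seq ℓ := by
  have := SA_compl hid hcf (SA_inter hid hcf (SA_compl hid hcf hX) (SA_compl hid hcf hY))
  rwa [compl_inter, compl_compl, compl_compl] at this

lemma SA_univ (hid : ∀ X : Set ℚ, cd (dcd X) = X)
    (hcf : ∀ F ∈ GruffOps q cd dcd, ClosedUnderOp (seq ℓ) F)
    (hne : (SA cd seq ℓ).Nonempty) : Set.univ ∈ SA cd seq ℓ := by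
  obtain ⟨X, hX⟩ := hne
  have h1 : X ∩ Xᶜ ∈ SA cd seq ℓ := SA_inter hid hcf hX (SA_compl hid hcf hX)
  rw [inter_compl_self] at h1
  have h2 := SA_compl hid hcf h1
  rwa [compl_empty] at h2

end OpsClosure

section Extend

lemma extend_step {q : ℕ → ℚ} (hq : Function.Bijective q)
    {cd : (ℕ → ℕ) → Set ℚ} {dcd : Set ℚ → ℕ → ℕ}
    (hid : ∀ X : Set ℚ, cd (dcd X) = X)
    {seq : Ordinal → Set (ℕ → ℕ)} {δ : Ordinal} (hδ : Order.IsSuccLimit δ)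
    (hmono : ∀ α β : Ordinal, α ≤ β → β < δ → seq α ⊆ seq β)
    (htotal : (⋃ α : Ordinal, ⋃ _ : α < δ, seq α) = Set.univ)
    (havoid : ∀ α : Ordinal, α < δ → ∃ x : ℕ → ℕ, ∀ y ∈ seq α, ¬ evDomLE x y)
    (hcf : ∀ α : Ordinal, α < δ → ∀ F ∈ GruffOps q cd dcd, ClosedUnderOp (seq α) F)
    {ℓ : Ordinal} (hℓ : ℓ < δ) {U : Set (Set ℚ)} (hU : UltraOn (SA cd seq ℓ) U)
    (hpos : ∀ Z ∈ U, ∀ P ∈ U, IsClosed P → Crowded P → UnbAbove P →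
      UnbAbove (Mx (P ∩ Z)))
    {P₀ : Set ℚ} (hP₀U : P₀ ∈ U) (hP₀c : IsClosed P₀) (hP₀cr : Crowded P₀)
    (hP₀u : UnbAbove P₀) (β₀ : Ordinal) (hβ₀ : β₀ < δ) :
    ∃ ℓ' U', ℓ < ℓ' ∧ β₀ ≤ ℓ' ∧ ℓ' < δ ∧ UltraOn (SA cd seq ℓ') U' ∧ U ⊆ U' ∧
      (∀ Z ∈ U', ∀ P ∈ U', IsClosed P → Crowded P → UnbAbove P →
        UnbAbove (Mx (P ∩ Z))) ∧
      (∀ Z ∈ U, ∃ P ∈ U', P ⊆ Z ∧ IsClosed P ∧ Crowded P ∧ UnbAbove P) := by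
  classical
  obtain ⟨f, hf⟩ := havoid ℓ hℓ
  set F : ℕ → ℕ := fun n => max n ((Finset.range (n+2)).sup f) with hF
  have hFid : ∀ n, n ≤ F n := fun n => le_max_left _ _
  have hFmono : Monotone F := by
    intro a b hab
    exact max_le_max hab (Finset.sup_mono (Finset.range_subset_range.2 (by omega)))
  have hkey : ∀ g ∈ seq ℓ, ∀ N, ∃ n, N ≤ n ∧ g (n+1) < F n := by
    intro g hg N
    have hne := hf g hg
    rw [evDomLE, Filter.eventually_atTop] at hne
    push_neg at hne
    obtain ⟨m, hmN, hm⟩ := hne (N+1)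
    refine ⟨m - 1, by omega, ?_⟩
    have hm1 : m - 1 + 1 = m := by omega
    rw [hm1]
    have hfF : f m ≤ F (m-1) :=
      le_trans (Finset.le_sup (Finset.mem_range.2 (by omega))) (le_max_right _ _)
    omega
  have hFmem : ∃ β, β < δ ∧ F ∈ seq β := by
    have : F ∈ ⋃ α : Ordinal, ⋃ _ : α < δ, seq α := htotal ▸ Set.mem_univ F
    simpa using this
  obtain ⟨β₁, hβ₁δ, hβ₁F⟩ := hFmem
  set ℓ' := max (max (Order.succ ℓ) β₀) β₁ with hℓ'
  have hℓ'δ : ℓ' < δ := max_lt (max_lt (hδ.succ_lt hℓ) hβ₀) hβ₁δ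
  have hℓℓ' : ℓ < ℓ' :=
    lt_of_lt_of_le (Order.lt_succ ℓ) (le_trans (le_max_left _ _) (le_max_left _ _))
  have hβ₀ℓ' : β₀ ≤ ℓ' := le_trans (le_max_right _ _) (le_max_left _ _)
  have hsub : SA cd seq ℓ ⊆ SA cd seq ℓ' :=
    Set.image_mono (hmono ℓ ℓ' (le_of_lt hℓℓ') hℓ'δ)
  have hFℓ' : F ∈ seq ℓ' := hmono β₁ ℓ' (le_max_right _ _) hℓ'δ hβ₁F
  set Sh : Set ℚ → Set ℚ := fun Z => shrink q (Mx (P₀ ∩ Z)) F with hSh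
  have hUA : U ⊆ SA cd seq ℓ := hU.1.1
  have hcfl := hcf ℓ hℓ
  have hcfl' := hcf ℓ' hℓ'δ
  have hShSA : ∀ Z ∈ U, Sh Z ∈ SA cd seq ℓ' := by
    intro Z hZ
    have h1 : P₀ ∩ Z ∈ SA cd seq ℓ := SA_inter hid hcfl (hUA hP₀U) (hUA hZ)
    have h2 : Mx (P₀ ∩ Z) ∈ SA cd seq ℓ := SA_mx hid hcfl h1
    exact SA_shrink hid hcfl' (hsub h2) hFℓ'
  have hXcr : ∀ Z ∈ U, Crowded (Mx (P₀ ∩ Z)) := fun Z hZ => crowded_mx _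
  have hXub : ∀ Z ∈ U, UnbAbove (Mx (P₀ ∩ Z)) :=
    fun Z hZ => hpos Z hZ P₀ hP₀U hP₀c hP₀cr hP₀u
  have hShperf : ∀ Z ∈ U, IsClosed (Sh Z) ∧ Crowded (Sh Z) ∧ UnbAbove (Sh Z) := by
    intro Z hZ
    have hcr := hXcr Z hZ
    have hub := hXub Z hZ
    have hfxmem : fgrowQ q (Mx (P₀ ∩ Z)) ∈ seq ℓ :=
      SA_fgrow hcfl (SA_mx hid hcfl (SA_inter hid hcfl (hUA hP₀U) (hUA hZ)))
    have hfgeq : fgrowQ q (Mx (P₀ ∩ Z)) = fX q (Mx (P₀ ∩ Z)) := by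
      rw [fgrowQ]; exact if_pos ⟨hcr, hub⟩
    have hinf : ∀ N, ∃ n, N ≤ n ∧ fX q (Mx (P₀ ∩ Z)) (n+1) < F n := by
      intro N
      obtain ⟨n, hn1, hn2⟩ := hkey _ hfxmem N
      rw [hfgeq] at hn2
      exact ⟨n, hn1, hn2⟩
    exact ⟨shrink_closed, shrink_crowded hq hcr hub hFid hFmono hinf,
      shrink_unbAbove hq hcr hub hFid hFmono hinf⟩
  have hShsub : ∀ Z, Sh Z ⊆ P₀ ∩ Z := fun Z => (shrink_subset hq).trans (mx_subset _)
  have hShmono : ∀ Z Z' : Set ℚ, Z ⊆ Z' → Sh Z ⊆ Sh Z' :=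
    fun Z Z' h => shrink_mono (mx_mono (inter_subset_inter_right _ h))
  have hunivU : Set.univ ∈ U := hU.1.2.1
  -- closure properties of the new family
  have hAc : ∀ X ∈ SA cd seq ℓ', Xᶜ ∈ SA cd seq ℓ' := fun X hX => SA_compl hid hcfl' hX
  have hAi : ∀ X ∈ SA cd seq ℓ', ∀ Y ∈ SA cd seq ℓ', X ∩ Y ∈ SA cd seq ℓ' :=
    fun X hX Y hY => SA_inter hid hcfl' hX hY
  -- base filter G
  set G : Set (Set ℚ) := {W ∈ SA cd seq ℓ' | ∃ Z₁ ∈ U, ∃ Z₂ ∈ U, Z₁ ∩ Sh Z₂ ⊆ W} with hG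
  have hGfilt : Filt (SA cd seq ℓ') G := by
    refine ⟨fun W hW => hW.1, ?_, ?_, ?_, ?_⟩
    · exact ⟨SA_univ hid hcfl' ⟨_, hsub (hUA hunivU)⟩, Set.univ, hunivU, Set.univ, hunivU,
        subset_univ _⟩
    · rintro ⟨_, Z₁, hZ₁, Z₂, hZ₂, hsub0⟩
      have hZZ : Z₁ ∩ Z₂ ∈ U := hU.1.2.2.2.1 Z₁ hZ₁ Z₂ hZ₂
      obtain ⟨x, hx⟩ := unbAbove_nonempty (hShperf _ hZZ).2.2
      have hx1 : x ∈ Z₁ ∩ Sh Z₂ :=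
        ⟨(hShsub _ hx).2.1, hShmono _ _ inter_subset_right hx⟩
      exact hsub0 hx1
    · rintro W ⟨hWA, Z₁, hZ₁, Z₂, hZ₂, hsubW⟩ W' ⟨hW'A, Z₁', hZ₁', Z₂', hZ₂', hsubW'⟩
      refine ⟨hAi W hWA W' hW'A, Z₁ ∩ Z₁', hU.1.2.2.2.1 _ hZ₁ _ hZ₁',
        Z₂ ∩ Z₂', hU.1.2.2.2.1 _ hZ₂ _ hZ₂', ?_⟩
      intro x hx
      exact ⟨hsubW ⟨hx.1.1, hShmono _ _ inter_subset_left hx.2⟩,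
        hsubW' ⟨hx.1.2, hShmono _ _ inter_subset_right hx.2⟩⟩
    · rintro W ⟨hWA, Z₁, hZ₁, Z₂, hZ₂, hsubW⟩ Y hYA hWY
      exact ⟨hYA, Z₁, hZ₁, Z₂, hZ₂, hsubW.trans hWY⟩
  -- ideal I
  set I : Set (Set ℚ) := {Y ∈ SA cd seq ℓ' | ∃ Z ∈ U, ¬ UnbAbove (Mx (Sh Z ∩ Y))} with hI
  have hIdown : ∀ Y ∈ I, ∀ Y' ∈ SA cd seq ℓ', Y' ⊆ Y → Y' ∈ I := by
    rintro Y ⟨hYA, Z, hZ, hYb⟩ Y' hY'A hY'Y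
    refine ⟨hY'A, Z, hZ, fun hc => hYb ?_⟩
    exact unbAbove_mono (mx_mono (inter_subset_inter_right _ hY'Y)) hc
  have hIunion : ∀ Y ∈ I, ∀ Y' ∈ I, Y ∪ Y' ∈ I := by
    rintro Y ⟨hYA, Z, hZ, hYb⟩ Y' ⟨hY'A, Z', hZ', hY'b⟩
    refine ⟨SA_union hid hcfl' hYA hY'A, Z ∩ Z', hU.1.2.2.2.1 _ hZ _ hZ', ?_⟩
    intro hc
    have hCcr : Crowded (Mx (Sh (Z ∩ Z') ∩ (Y ∪ Y'))) := crowded_mx _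
    have hCsub : Mx (Sh (Z ∩ Z') ∩ (Y ∪ Y')) ⊆ (Sh Z ∩ Y) ∪ (Sh Z' ∩ Y') := by
      intro x hx
      have hx' := mx_subset _ hx
      rcases hx'.2 with h | h
      · exact Or.inl ⟨hShmono _ _ inter_subset_left hx'.1, h⟩
      · exact Or.inr ⟨hShmono _ _ inter_subset_right hx'.1, h⟩
    rcases dichotomy hCcr hc hCsub with h | h
    · exact hYb h
    · exact hY'b h
  have hGI : ∀ W ∈ G, W ∉ I := by
    rintro W ⟨hWA, Z₁, hZ₁, Z₂, hZ₂, hsubW⟩ ⟨_, Z, hZ, hWb⟩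
    apply hWb
    have hZZZ : Z ∩ Z₁ ∩ Z₂ ∈ U :=
      hU.1.2.2.2.1 _ (hU.1.2.2.2.1 _ hZ _ hZ₁) _ hZ₂
    have hstar : Sh (Z ∩ Z₁ ∩ Z₂) ⊆ Sh Z ∩ W := by
      intro x hx
      exact ⟨hShmono _ _ (fun y hy => hy.1.1) hx,
        hsubW ⟨(hShsub _ hx).2.1.2, hShmono _ _ (fun y hy => hy.2) hx⟩⟩
    have hcr := (hShperf _ hZZZ).2.1
    have hub := (hShperf _ hZZZ).2.2
    exact unbAbove_mono (subset_mx hstar hcr) hub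
  obtain ⟨U', hU', hGU', hU'I⟩ := exists_ultra hAc hAi hIdown hIunion hGfilt hGI
  have hUG : U ⊆ G := by
    intro Z hZ
    exact ⟨hsub (hUA hZ), Z, hZ, Z, hZ, fun x hx => hx.1⟩
  refine ⟨ℓ', U', hℓℓ', hβ₀ℓ', hℓ'δ, hU', hUG.trans hGU', ?_, ?_⟩
  · intro Z hZ P hP hPc hPcr hPu
    have hPZ : P ∩ Z ∈ U' := hU'.1.2.2.2.1 P hP Z hZ
    have hPZA : P ∩ Z ∈ SA cd seq ℓ' := hU'.1.1 hPZ
    have hnotI : P ∩ Z ∉ I := hU'I _ hPZ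
    rw [hI, mem_setOf_eq] at hnotI
    push_neg at hnotI
    have := hnotI hPZA Set.univ hunivU
    exact unbAbove_mono (mx_mono inter_subset_right) this
  · intro Z hZ
    refine ⟨Sh Z, hGU' ⟨hShSA Z hZ, Set.univ, hunivU, Z, hZ, fun x hx => hx.2⟩,
      (hShsub Z).trans inter_subset_right, (hShperf Z hZ).1, (hShperf Z hZ).2.1,
      (hShperf Z hZ).2.2⟩

end Extend

section States

lemma unbAbove_univ : UnbAbove (Set.univ : Set ℚ) := fun r => ⟨r + 1, mem_univ _, lt_add_one r⟩

lemma initial_state {q : ℕ → ℚ}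
    {cd : (ℕ → ℕ) → Set ℚ} {dcd : Set ℚ → ℕ → ℕ}
    (hid : ∀ X : Set ℚ, cd (dcd X) = X)
    {seq : Ordinal → Set (ℕ → ℕ)} {δ : Ordinal}
    (htotal : (⋃ α : Ordinal, ⋃ _ : α < δ, seq α) = Set.univ)
    (hcf : ∀ α : Ordinal, α < δ → ∀ F ∈ GruffOps q cd dcd, ClosedUnderOp (seq α) F) :
    ∃ ℓ₀, ℓ₀ < δ ∧ ∃ U₀, UltraOn (SA cd seq ℓ₀) U₀ ∧
      (∀ Z ∈ U₀, ∀ P ∈ U₀, IsClosed P → Crowded P → UnbAbove P →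
        UnbAbove (Mx (P ∩ Z))) := by
  classical
  have huniv : ∃ β, β < δ ∧ dcd Set.univ ∈ seq β := by
    have : dcd Set.univ ∈ ⋃ α : Ordinal, ⋃ _ : α < δ, seq α := htotal ▸ Set.mem_univ _
    simpa using this
  obtain ⟨ℓ₀, hℓ₀δ, hdcd⟩ := huniv
  have hcfl := hcf ℓ₀ hℓ₀δ
  have hunivSA : Set.univ ∈ SA cd seq ℓ₀ := ⟨dcd Set.univ, hdcd, hid _⟩
  set G : Set (Set ℚ) := {W ∈ SA cd seq ℓ₀ | Set.univ ⊆ W} with hG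
  set I : Set (Set ℚ) := {Y ∈ SA cd seq ℓ₀ | ¬ UnbAbove (Mx Y)} with hI
  have hGfilt : Filt (SA cd seq ℓ₀) G := by
    refine ⟨fun W hW => hW.1, ⟨hunivSA, subset_rfl⟩, ?_, ?_, ?_⟩
    · rintro ⟨_, hsub⟩
      exact absurd (hsub (mem_univ (0:ℚ))) (notMem_empty _)
    · rintro Z ⟨hZA, hZu⟩ Z' ⟨hZ'A, hZ'u⟩
      exact ⟨SA_inter hid hcfl hZA hZ'A, subset_inter hZu hZ'u⟩
    · rintro Z ⟨hZA, hZu⟩ Y hYA hZY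
      exact ⟨hYA, hZu.trans hZY⟩
  have hGI : ∀ W ∈ G, W ∉ I := by
    rintro W ⟨hWA, hWu⟩ ⟨_, hWb⟩
    apply hWb
    have hWeq : W = Set.univ := univ_subset_iff.1 hWu
    rw [hWeq]
    exact unbAbove_mono (subset_mx subset_rfl crowded_univ) unbAbove_univ
  have hIdown : ∀ Y ∈ I, ∀ Y' ∈ SA cd seq ℓ₀, Y' ⊆ Y → Y' ∈ I := by
    rintro Y ⟨hYA, hYb⟩ Y' hY'A hY'Y
    exact ⟨hY'A, fun hc => hYb (unbAbove_mono (mx_mono hY'Y) hc)⟩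
  have hIunion : ∀ Y ∈ I, ∀ Y' ∈ I, Y ∪ Y' ∈ I := by
    rintro Y ⟨hYA, hYb⟩ Y' ⟨hY'A, hY'b⟩
    refine ⟨SA_union hid hcfl hYA hY'A, fun hc => ?_⟩
    rcases dichotomy (crowded_mx _) hc (mx_subset _) with h | h
    · exact hYb h
    · exact hY'b h
  obtain ⟨U₀, hU₀, hGU₀, hU₀I⟩ := exists_ultra (fun X hX => SA_compl hid hcfl hX)
    (fun X hX Y hY => SA_inter hid hcfl hX hY) hIdown hIunion hGfilt hGI
  refine ⟨ℓ₀, hℓ₀δ, U₀, hU₀, ?_⟩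
  intro Z hZ P hP _ _ _
  have hPZ : P ∩ Z ∈ U₀ := hU₀.1.2.2.2.1 P hP Z hZ
  have hnotI := hU₀I _ hPZ
  rw [hI, mem_setOf_eq] at hnotI
  push_neg at hnotI
  exact hnotI (hU₀.1.1 hPZ)

lemma mem_SA_sup {cd : (ℕ → ℕ) → Set ℚ}
    {seq : Ordinal → Set (ℕ → ℕ)} {δ : Ordinal}
    (hmono : ∀ α β : Ordinal, α ≤ β → β < δ → seq α ⊆ seq β)
    (hcont : ∀ γ : Ordinal, γ < δ → Order.IsSuccLimit γ →
      seq γ = ⋃ α : Ordinal, ⋃ _ : α < γ, seq α)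
    {L : Set Ordinal} (hLne : L.Nonempty) (hLδ : ∀ β ∈ L, β < δ) (hsup : sSup L < δ)
    {X : Set ℚ} (hX : X ∈ SA cd seq (sSup L)) : ∃ β ∈ L, X ∈ SA cd seq β := by
  classical
  have hbdd : BddAbove L := ⟨δ, fun β hβ => le_of_lt (hLδ β hβ)⟩
  by_cases hin : ∃ β ∈ L, sSup L ≤ β
  · obtain ⟨β, hβL, hβs⟩ := hin
    have : β = sSup L := le_antisymm (le_csSup hbdd hβL) hβs
    exact ⟨β, hβL, this ▸ hX⟩
  · push_neg at hin
    have hex : ∀ a, a < sSup L → ∃ γ ∈ L, a < γ := by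
      intro a ha
      by_contra hcon
      push_neg at hcon
      exact absurd (csSup_le hLne hcon) (not_le.2 ha)
    have hlim : Order.IsSuccLimit (sSup L) := by
      refine Ordinal.isSuccLimit_iff.2 ⟨?_, Order.isSuccPrelimit_of_succ_lt ?_⟩
      · intro h0
        obtain ⟨β, hβ⟩ := hLne
        have := hin β hβ
        rw [h0] at this
        exact absurd this (not_lt_of_ge (zero_le (a := β)))
      · intro a ha
        obtain ⟨γ, hγL, haγ⟩ := hex a ha
        exact lt_of_le_of_lt (Order.succ_le_of_lt haγ) (hin γ hγL)
    obtain ⟨h, hh, rfl⟩ := hX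
    rw [hcont (sSup L) hsup hlim] at hh
    simp only [mem_iUnion, exists_prop] at hh
    obtain ⟨α, hαs, hhα⟩ := hh
    obtain ⟨γ, hγL, hαγ⟩ := hex α hαs
    exact ⟨γ, hγL, ⟨h, hmono α γ (le_of_lt hαγ) (hLδ γ hγL) hhα, rfl⟩⟩

end States

section GStates

def GSt := Ordinal × Ordinal × Set (Set ℚ) × Set (Set ℚ)

def gm (s : GSt) : Ordinal := s.1
def gl (s : GSt) : Ordinal := s.2.1
def gV (s : GSt) : Set (Set ℚ) := s.2.2.1
def gU (s : GSt) : Set (Set ℚ) := s.2.2.2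

def ValidSt (cd : (ℕ → ℕ) → Set ℚ) (seq : Ordinal → Set (ℕ → ℕ)) (δ : Ordinal)
    (s : GSt) : Prop :=
  gm s ≤ gl s ∧ gl s < δ ∧ gV s ⊆ gU s ∧
    UltraOn (SA cd seq (gm s)) (gV s) ∧ UltraOn (SA cd seq (gl s)) (gU s) ∧
    (∀ Z ∈ gV s, ∃ P ∈ gU s, P ⊆ Z ∧ IsClosed P ∧ Crowded P ∧ UnbAbove P) ∧
    (∀ Z ∈ gU s, ∀ P ∈ gU s, IsClosed P → Crowded P → UnbAbove P →
      UnbAbove (Mx (P ∩ Z)))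

def gr (s t : GSt) : Prop := s = t ∨ (gl s ≤ gm t ∧ gU s ⊆ gV t)

lemma gr_trans {cd seq δ} {a b c : GSt} (hb : ValidSt cd seq δ b)
    (hab : gr a b) (hbc : gr b c) : gr a c := by
  rcases hab with rfl | hab
  · exact hbc
  rcases hbc with rfl | hbc
  · exact Or.inr hab
  exact Or.inr ⟨le_trans hab.1 (le_trans hb.1 hbc.1), (hab.2.trans hb.2.2.1).trans hbc.2⟩

lemma step_state {q : ℕ → ℚ} (hq : Function.Bijective q)
    {cd : (ℕ → ℕ) → Set ℚ} {dcd : Set ℚ → ℕ → ℕ}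
    (hid : ∀ X : Set ℚ, cd (dcd X) = X)
    {seq : Ordinal → Set (ℕ → ℕ)} {δ : Ordinal} (hδ : Order.IsSuccLimit δ)
    (hmono : ∀ α β : Ordinal, α ≤ β → β < δ → seq α ⊆ seq β)
    (htotal : (⋃ α : Ordinal, ⋃ _ : α < δ, seq α) = Set.univ)
    (havoid : ∀ α : Ordinal, α < δ → ∃ x : ℕ → ℕ, ∀ y ∈ seq α, ¬ evDomLE x y)
    (hcf : ∀ α : Ordinal, α < δ → ∀ F ∈ GruffOps q cd dcd, ClosedUnderOp (seq α) F)
    {s : GSt} (hs : ValidSt cd seq δ s) {β₀ : Ordinal} (hβ₀ : β₀ < δ) :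
    ∃ t : GSt, ValidSt cd seq δ t ∧ gl s ≤ gm t ∧ gU s ⊆ gV t ∧ gl s < gl t ∧
      β₀ ≤ gl t := by
  obtain ⟨hm, hlδ, hVU, hVu, hUu, hwit, hpos⟩ := hs
  obtain ⟨P₀, hP₀U, _, hP₀c, hP₀cr, hP₀u⟩ := hwit Set.univ hVu.1.2.1
  obtain ⟨ℓ', U', hℓℓ', hβ₀ℓ', hℓ'δ, hU'u, hUU', hpos', hwit'⟩ :=
    extend_step hq hid hδ hmono htotal havoid hcf hlδ hUu hpos hP₀U hP₀c hP₀cr hP₀u β₀ hβ₀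
  exact ⟨(gl s, ℓ', gU s, U'), ⟨le_of_lt hℓℓ', hℓ'δ, hUU', hUu, hU'u, hwit', hpos'⟩,
    le_refl _, subset_rfl, hℓℓ', hβ₀ℓ'⟩

end GStates

/-- if `cd : ω^ω → 𝔓(ℚ)` and `dcd : 𝔓(ℚ) → ω^ω` satisfy `cd ∘ dcd = id`,
`κ` is regular, and there exists a `⟨𝔡, ℱ_{gruff}, κ⟩`-pathway, then there exists a gruff
ultrafilter: an ultrafilter on `ℚ` every element of which contains a perfect member. -/
theorem stmt12 (q : ℕ → ℚ) (hq : Function.Bijective q)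
    (cd : (ℕ → ℕ) → Set ℚ) (dcd : Set ℚ → (ℕ → ℕ))
    (hid : ∀ X : Set ℚ, cd (dcd X) = X)
    (κ : Cardinal) (hκ : κ.IsRegular)
    (seq : Ordinal → Set (ℕ → ℕ))
    (hpath : IsPathway evDomLE (GruffOps q cd dcd) κ.ord seq) :
    ∃ u : Ultrafilter ℚ, ∀ A ∈ u, ∃ P ∈ u, P ⊆ A ∧ IsClosed P ∧ Crowded P := by
  classical
  obtain ⟨hmono, hcont, htotal, havoid, hcf⟩ := hpath
  set δ := κ.ord with hδdef
  have hδ : Order.IsSuccLimit δ := Cardinal.isSuccLimit_ord hκ.1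
  -- initial state
  obtain ⟨ℓ₀, hℓ₀δ, U₀, hU₀u, hU₀pos⟩ := initial_state hid htotal hcf
  have hs₀ : ∃ s : GSt, ValidSt cd seq δ s := by
    obtain ⟨ℓ', U', hℓℓ', hβ₀ℓ', hℓ'δ, hU'u, hUU', hpos', hwit'⟩ :=
      extend_step hq hid hδ hmono htotal havoid hcf hℓ₀δ hU₀u hU₀pos hU₀u.1.2.1
        isClosed_univ crowded_univ unbAbove_univ ℓ₀ hℓ₀δ
    exact ⟨(ℓ₀, ℓ', U₀, U'), le_of_lt hℓℓ', hℓ'δ, hUU', hU₀u, hU'u, hwit', hpos'⟩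
  obtain ⟨s₀, hs₀v⟩ := hs₀
  -- comparability within a chain
  have hcompgen : ∀ (c : Set {s : GSt // ValidSt cd seq δ s}),
      IsChain (fun a b => gr a.1 b.1) c → ∀ p ∈ c, ∀ p' ∈ c,
      (gU p.1 ⊆ gU p'.1 ∧ gl p.1 ≤ gl p'.1) ∨
        (gU p'.1 ⊆ gU p.1 ∧ gl p'.1 ≤ gl p.1) := by
    intro c hc p hp p' hp'
    have hgr2 : ∀ a b : {s : GSt // ValidSt cd seq δ s}, gr a.1 b.1 →
        gU a.1 ⊆ gU b.1 ∧ gl a.1 ≤ gl b.1 := by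
      rintro a b (heq | hlt)
      · rw [heq]
        exact ⟨subset_rfl, le_refl _⟩
      · exact ⟨hlt.2.trans b.2.2.2.1, hlt.1.trans b.2.1⟩
    rcases eq_or_ne p p' with rfl | hne
    · exact Or.inl ⟨subset_rfl, le_refl _⟩
    rcases hc hp hp' hne with h | h
    · exact Or.inl (hgr2 _ _ h)
    · exact Or.inr (hgr2 _ _ h)
  by_cases H : ∃ c : Set {s : GSt // ValidSt cd seq δ s},
      IsChain (fun a b => gr a.1 b.1) c ∧
        sSup ((fun p : {s : GSt // ValidSt cd seq δ s} => gl p.1) '' c) = δ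
  · -- THE CHAIN REACHES THE TOP: build the gruff ultrafilter
    obtain ⟨c, hc, hsup⟩ := H
    have hcne : c.Nonempty := by
      by_contra hce
      rw [not_nonempty_iff_eq_empty] at hce
      rw [hce, image_empty, csSup_empty] at hsup
      exact hδ.pos.ne' (hsup.symm.trans Ordinal.bot_eq_zero)
    have hlδ : ∀ p ∈ c, gl p.1 < δ := fun p _ => p.2.2.1
    have hcof : ∀ β, β < δ → ∃ p ∈ c, β < gl p.1 := by
      intro β hβ
      by_contra hcon
      push_neg at hcon
      have hle : sSup ((fun p : {s : GSt // ValidSt cd seq δ s} => gl p.1) '' c) ≤ β := by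
        apply csSup_le (hcne.image _)
        rintro b ⟨p, hp, rfl⟩
        exact hcon p hp
      rw [hsup] at hle
      exact absurd hβ (not_lt.2 hle)
    have hdecide : ∀ Y : Set ℚ, ∃ p ∈ c, Y ∈ SA cd seq (gl p.1) := by
      intro Y
      have hm : dcd Y ∈ ⋃ α : Ordinal, ⋃ _ : α < δ, seq α := htotal ▸ mem_univ _
      simp only [mem_iUnion, exists_prop] at hm
      obtain ⟨β, hβδ, hdY⟩ := hm
      obtain ⟨p, hp, hβp⟩ := hcof β hβδ
      exact ⟨p, hp, ⟨dcd Y, hmono β (gl p.1) (le_of_lt hβp) (hlδ p hp) hdY, hid Y⟩⟩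
    have hmemup : ∀ (Z : Set ℚ) p, p ∈ c → Z ∈ gU p.1 → ∀ Y : Set ℚ, Z ⊆ Y →
        Y ∈ ⋃ p ∈ c, gU p.1 := by
      intro Z p hp hZ Y hZY
      obtain ⟨p', hp', hY⟩ := hdecide Y
      rcases hcompgen c hc p hp p' hp' with ⟨h1, _⟩ | ⟨h1, h2⟩
      · exact mem_iUnion₂.2 ⟨p', hp', p'.2.2.2.2.2.1.1.2.2.2.2 Z (h1 hZ) Y hY hZY⟩
      · have hY' : Y ∈ SA cd seq (gl p.1) :=
          Set.image_mono (hmono _ _ h2 (hlδ p hp)) hY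
        exact mem_iUnion₂.2 ⟨p, hp, p.2.2.2.2.2.1.1.2.2.2.2 Z hZ Y hY' hZY⟩
    set FF : Filter ℚ := Filter.mk (⋃ p ∈ c, gU p.1) (by
        obtain ⟨p, hp⟩ := hcne
        exact mem_iUnion₂.2 ⟨p, hp, p.2.2.2.2.2.1.1.2.1⟩)
      (by
        intro Z Y hZ hZY
        obtain ⟨p, hp, hZp⟩ := mem_iUnion₂.1 hZ
        exact hmemup Z p hp hZp Y hZY)
      (by
        intro Z Z' hZ hZ'
        obtain ⟨p, hp, hZp⟩ := mem_iUnion₂.1 hZ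
        obtain ⟨p', hp', hZ'p⟩ := mem_iUnion₂.1 hZ'
        rcases hcompgen c hc p hp p' hp' with ⟨h1, _⟩ | ⟨h1, _⟩
        · exact mem_iUnion₂.2 ⟨p', hp', p'.2.2.2.2.2.1.1.2.2.2.1 Z (h1 hZp) Z' hZ'p⟩
        · exact mem_iUnion₂.2 ⟨p, hp, p.2.2.2.2.2.1.1.2.2.2.1 Z hZp Z' (h1 hZ'p)⟩)
      with hFF
    have hmemFF : ∀ Y : Set ℚ, Y ∈ FF ↔ Y ∈ ⋃ p ∈ c, gU p.1 := fun Y => Iff.rfl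
    have hdec : ∀ s : Set ℚ, sᶜ ∉ FF ↔ s ∈ FF := by
      intro s
      constructor
      · intro hns
        obtain ⟨p, hp, hs⟩ := hdecide s
        rcases p.2.2.2.2.2.1.2 s hs with h | h
        · exact (hmemFF s).2 (mem_iUnion₂.2 ⟨p, hp, h⟩)
        · exact absurd ((hmemFF sᶜ).2 (mem_iUnion₂.2 ⟨p, hp, h⟩)) hns
      · intro hs hns
        obtain ⟨p, hp, hsp⟩ := mem_iUnion₂.1 ((hmemFF s).1 hs)
        obtain ⟨p', hp', hsp'⟩ := mem_iUnion₂.1 ((hmemFF sᶜ).1 hns)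
        rcases hcompgen c hc p hp p' hp' with ⟨h1, _⟩ | ⟨h1, _⟩
        · have hint : s ∩ sᶜ ∈ gU p'.1 :=
            p'.2.2.2.2.2.1.1.2.2.2.1 s (h1 hsp) sᶜ hsp'
          rw [inter_compl_self] at hint
          exact p'.2.2.2.2.2.1.1.2.2.1 hint
        · have hint : s ∩ sᶜ ∈ gU p.1 :=
            p.2.2.2.2.2.1.1.2.2.2.1 s hsp sᶜ (h1 hsp')
          rw [inter_compl_self] at hint
          exact p.2.2.2.2.2.1.1.2.2.1 hint
    refine ⟨Ultrafilter.ofComplNotMemIff FF hdec, ?_⟩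
    intro A hA
    have hA' : A ∈ FF := hA
    obtain ⟨p, hp, hAp⟩ := mem_iUnion₂.1 ((hmemFF A).1 hA')
    obtain ⟨p', hp', hlp'⟩ := hcof (gl p.1) (hlδ p hp)
    have hne : p ≠ p' := by
      intro h
      rw [h] at hlp'
      exact lt_irrefl _ hlp'
    have hVsub : gU p.1 ⊆ gV p'.1 := by
      rcases hc hp hp' hne with h | h
      · rcases h with heq | h
        · exfalso
          rw [heq] at hlp'
          exact lt_irrefl _ hlp'
        · exact h.2
      · rcases h with heq | h
        · exfalso
          rw [heq] at hlp'
          exact lt_irrefl _ hlp'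
        · exfalso
          exact absurd (lt_of_le_of_lt (h.1.trans p.2.1) hlp') (lt_irrefl _)
    obtain ⟨P, hPU, hPA, hPc, hPcr, _⟩ := p'.2.2.2.2.2.2.1 A (hVsub hAp)
    refine ⟨P, ?_, hPA, hPc, hPcr⟩
    exact (show P ∈ FF from (hmemFF P).2 (mem_iUnion₂.2 ⟨p', hp', hPU⟩))
  · -- otherwise Zorn's lemma yields a contradiction
    exfalso
    push_neg at H
    have hbound : ∀ c : Set {s : GSt // ValidSt cd seq δ s},
        IsChain (fun a b => gr a.1 b.1) c →
          ∃ ub : {s : GSt // ValidSt cd seq δ s}, ∀ p ∈ c, gr p.1 ub.1 := by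
      intro c hc
      rcases Set.eq_empty_or_nonempty c with rfl | hcne
      · exact ⟨⟨s₀, hs₀v⟩, fun p hp => absurd hp (notMem_empty p)⟩
      by_cases hmax : ∃ pm ∈ c, ∀ p ∈ c, gr p.1 pm.1
      · obtain ⟨pm, _, h⟩ := hmax
        exact ⟨pm, h⟩
      push_neg at hmax
      have hnomax : ∀ p ∈ c, ∃ p' ∈ c, gl p.1 ≤ gm p'.1 ∧ gU p.1 ⊆ gV p'.1 := by
        intro p hp
        obtain ⟨p', hp', hnp⟩ := hmax p hp
        have hne : p' ≠ p := by
          intro h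
          exact hnp (h ▸ Or.inl rfl)
        rcases hc hp' hp hne with h | h
        · exact absurd h hnp
        · rcases h with heq | h
          · exfalso
            exact hnp (Or.inl heq.symm)
          · exact ⟨p', hp', h.1, h.2⟩
      set L := (fun p : {s : GSt // ValidSt cd seq δ s} => gl p.1) '' c with hL
      have hLne : L.Nonempty := hcne.image _
      have hLδ : ∀ β ∈ L, β < δ := by
        rintro β ⟨p, hp, rfl⟩
        exact p.2.2.1
      have hsupδ : sSup L < δ :=
        lt_of_le_of_ne (csSup_le hLne (fun b hb => le_of_lt (hLδ b hb))) (H c hc)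
      have hbddL : BddAbove L := ⟨δ, fun β hβ => le_of_lt (hLδ β hβ)⟩
      have hglle : ∀ p ∈ c, gl p.1 ≤ sSup L := fun p hp => le_csSup hbddL ⟨p, hp, rfl⟩
      have hUsub : ∀ p ∈ c, gU p.1 ⊆ SA cd seq (sSup L) := by
        intro p hp
        refine (p.2.2.2.2.2.1.1.1).trans ?_
        exact Set.image_mono (hmono _ _ (hglle p hp) hsupδ)
      have hvalid : ValidSt cd seq δ (sSup L, sSup L, ⋃ p ∈ c, gU p.1, ⋃ p ∈ c, gU p.1) := by
        have hUltra : UltraOn (SA cd seq (sSup L)) (⋃ p ∈ c, gU p.1) := by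
          refine ⟨⟨?_, ?_, ?_, ?_, ?_⟩, ?_⟩
          · intro Z hZ
            obtain ⟨p, hp, hZp⟩ := mem_iUnion₂.1 hZ
            exact hUsub p hp hZp
          · obtain ⟨p, hp⟩ := hcne
            exact mem_iUnion₂.2 ⟨p, hp, p.2.2.2.2.2.1.1.2.1⟩
          · intro hmem
            obtain ⟨p, _, hZp⟩ := mem_iUnion₂.1 hmem
            exact p.2.2.2.2.2.1.1.2.2.1 hZp
          · intro Z hZ Z' hZ'
            obtain ⟨p, hp, hZp⟩ := mem_iUnion₂.1 hZ
            obtain ⟨p', hp', hZ'p⟩ := mem_iUnion₂.1 hZ'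
            rcases hcompgen c hc p hp p' hp' with ⟨h1, _⟩ | ⟨h1, _⟩
            · exact mem_iUnion₂.2 ⟨p', hp', p'.2.2.2.2.2.1.1.2.2.2.1 Z (h1 hZp) Z' hZ'p⟩
            · exact mem_iUnion₂.2 ⟨p, hp, p.2.2.2.2.2.1.1.2.2.2.1 Z hZp Z' (h1 hZ'p)⟩
          · intro Z hZ Y hY hZY
            obtain ⟨p, hp, hZp⟩ := mem_iUnion₂.1 hZ
            obtain ⟨β, hβL, hYβ⟩ := mem_SA_sup hmono hcont hLne hLδ hsupδ hY
            obtain ⟨p', hp', rfl⟩ := hβL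
            rcases hcompgen c hc p hp p' hp' with ⟨h1, _⟩ | ⟨h1, h2⟩
            · exact mem_iUnion₂.2 ⟨p', hp', p'.2.2.2.2.2.1.1.2.2.2.2 Z (h1 hZp) Y hYβ hZY⟩
            · have hY' : Y ∈ SA cd seq (gl p.1) :=
                Set.image_mono (hmono _ _ h2 (p.2.2.1)) hYβ
              exact mem_iUnion₂.2 ⟨p, hp, p.2.2.2.2.2.1.1.2.2.2.2 Z hZp Y hY' hZY⟩
          · intro Y hY
            obtain ⟨β, hβL, hYβ⟩ := mem_SA_sup hmono hcont hLne hLδ hsupδ hY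
            obtain ⟨p, hp, rfl⟩ := hβL
            rcases p.2.2.2.2.2.1.2 Y hYβ with h | h
            · exact Or.inl (mem_iUnion₂.2 ⟨p, hp, h⟩)
            · exact Or.inr (mem_iUnion₂.2 ⟨p, hp, h⟩)
        refine ⟨le_refl _, hsupδ, subset_rfl, hUltra, hUltra, ?_, ?_⟩
        · intro Z hZ
          obtain ⟨p, hp, hZp⟩ := mem_iUnion₂.1 hZ
          obtain ⟨p', hp', _, hsub'⟩ := hnomax p hp
          obtain ⟨P, hPU, hPZ, hPc, hPcr, hPu⟩ := p'.2.2.2.2.2.2.1 Z (hsub' hZp)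
          exact ⟨P, mem_iUnion₂.2 ⟨p', hp', hPU⟩, hPZ, hPc, hPcr, hPu⟩
        · intro Z hZ P hP hPc hPcr hPu
          obtain ⟨p, hp, hZp⟩ := mem_iUnion₂.1 hZ
          obtain ⟨p', hp', hPp⟩ := mem_iUnion₂.1 hP
          rcases hcompgen c hc p hp p' hp' with ⟨h1, _⟩ | ⟨h1, _⟩
          · exact p'.2.2.2.2.2.2.2 Z (h1 hZp) P hPp hPc hPcr hPu
          · exact p.2.2.2.2.2.2.2 Z hZp P (h1 hPp) hPc hPcr hPu
      refine ⟨⟨(sSup L, sSup L, ⋃ p ∈ c, gU p.1, ⋃ p ∈ c, gU p.1), hvalid⟩, ?_⟩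
      intro p hp
      exact Or.inr ⟨hglle p hp, fun Z hZ => mem_iUnion₂.2 ⟨p, hp, hZ⟩⟩
    obtain ⟨M, hM⟩ := exists_maximal_of_chains_bounded hbound
      (fun {a b c} hab hbc => gr_trans b.2 hab hbc)
    obtain ⟨t, htv, h1, h2, h3, _⟩ :=
      step_state hq hid hδ hmono htotal havoid hcf M.2 M.2.2.1
    have hMt := hM ⟨t, htv⟩ (Or.inr ⟨h1, h2⟩)
    rcases hMt with heq | hlt
    · have heq' : t = M.1 := heq
      rw [heq'] at h3
      exact lt_irrefl _ h3
    · exact absurd (lt_of_le_of_lt (hlt.1.trans M.2.1) h3) (lt_irrefl _)
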